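/- Let f ∈ ℂ[x_1,…,x_n] be homogeneous of degree n and W = p·f. The map ⊕_{k≥0} R(f)_{kn} → R(W)_0 sending the class of a homogeneous polynomial u(x) of degree kn to the class of p^k·u(x) is a well-defined ring isomorphism, where R(f) = ℂ[x]/(∂f/∂x_1,…,∂f/∂x_n), R(W) = ℂ[x,p]/(∂W/∂x_1,…,∂W/∂x_n,∂W/∂p), and R(W)_0 is the charge-0 graded piece with ch(x_i)=1, ch(p)=−n. -/

import Mathlib

open MvPolynomial

noncomputable section

/-- The charge grading on `ℂ[x_1,…,x_n,p]`: `ch(x_i) = 1`, `ch(p) = -n`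
(variables indexed by `Fin (n+1)`, `p = Fin.last n`). -/
def chargeWt (n : ℕ) : Fin (n + 1) → ℤ :=
  fun v => if v = Fin.last n then -(n : ℤ) else 1

/-- The Jacobian ideal `J(f) = (∂f/∂x_1, …, ∂f/∂x_n)`. -/
def Jf (n : ℕ) (f : MvPolynomial (Fin n) ℂ) : Ideal (MvPolynomial (Fin n) ℂ) :=
  Ideal.span (Set.range fun i => pderiv i f)

/-- The potential `W = p · f(x)` in `ℂ[x_1,…,x_n,p]`. -/
def Wpol (n : ℕ) (f : MvPolynomial (Fin n) ℂ) : MvPolynomial (Fin (n + 1)) ℂ :=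
  X (Fin.last n) * rename Fin.castSucc f

/-- The Jacobian ideal `J(W) = (∂W/∂x_1, …, ∂W/∂x_n, ∂W/∂p)`. -/
def JW (n : ℕ) (f : MvPolynomial (Fin n) ℂ) : Ideal (MvPolynomial (Fin (n + 1)) ℂ) :=
  Ideal.span (Set.range fun v => pderiv v (Wpol n f))

/-- The subring `⊕_{k ≥ 0} R(f)_{kn}` of the Jacobian ring `R(f) = ℂ[x]/J(f)`:
the subalgebra generated by classes of homogeneous polynomials of degree a multiple of `n`. -/
def veroneseJacobian (n : ℕ) (f : MvPolynomial (Fin n) ℂ) :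
    Subalgebra ℂ (MvPolynomial (Fin n) ℂ ⧸ Jf n f) :=
  Algebra.adjoin ℂ
    {a | ∃ (k : ℕ) (u : MvPolynomial (Fin n) ℂ),
      u.IsHomogeneous (k * n) ∧ a = Ideal.Quotient.mk (Jf n f) u}

/-- The charge-`0` graded piece `R(W)_0` of the Jacobian ring `R(W) = ℂ[x,p]/J(W)`:
the subalgebra generated by classes of charge-homogeneous polynomials of charge `0`. -/
def chargeZeroJacobian (n : ℕ) (f : MvPolynomial (Fin n) ℂ) :
    Subalgebra ℂ (MvPolynomial (Fin (n + 1)) ℂ ⧸ JW n f) :=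
  Algebra.adjoin ℂ
    {a | ∃ w : MvPolynomial (Fin (n + 1)) ℂ,
      w.IsWeightedHomogeneous (chargeWt n) 0 ∧ a = Ideal.Quotient.mk (JW n f) w}

namespace VJaux

open Finsupp

variable {n : ℕ} {f : MvPolynomial (Fin n) ℂ}

/-- The evaluation map sending `p ↦ 1`, `x_i ↦ x_i`. -/
def ev (n : ℕ) : MvPolynomial (Fin (n + 1)) ℂ →ₐ[ℂ] MvPolynomial (Fin n) ℂ :=
  aeval (Fin.lastCases 1 X)

lemma ev_X_last : ev n (X (Fin.last n)) = 1 := by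
  simp [ev]

lemma ev_rename (u : MvPolynomial (Fin n) ℂ) : ev n (rename Fin.castSucc u) = u := by
  rw [ev, aeval_rename]
  have h : ((Fin.lastCases 1 X : Fin (n+1) → MvPolynomial (Fin n) ℂ) ∘ Fin.castSucc) = X := by
    funext i; simp
  rw [h, aeval_X_left_apply]

lemma pderiv_last_rename (u : MvPolynomial (Fin n) ℂ) :
    pderiv (Fin.last n) (rename Fin.castSucc u) = 0 := by
  apply pderiv_eq_zero_of_notMem_vars
  intro h
  obtain ⟨i, -, hi⟩ := Finset.mem_image.1 (vars_rename _ u h)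
  exact (Fin.castSucc_lt_last i).ne hi

lemma pderiv_W_castSucc (f : MvPolynomial (Fin n) ℂ) (i : Fin n) :
    pderiv (Fin.castSucc i) (Wpol n f)
      = X (Fin.last n) * rename Fin.castSucc (pderiv i f) := by
  rw [Wpol, pderiv_mul, pderiv_rename (Fin.castSucc_injective n),
    pderiv_X_of_ne (Fin.castSucc_lt_last i).ne', zero_mul, zero_add]

lemma pderiv_W_last (f : MvPolynomial (Fin n) ℂ) :
    pderiv (Fin.last n) (Wpol n f) = rename Fin.castSucc f := by
  rw [Wpol, pderiv_mul, pderiv_X_self, one_mul, pderiv_last_rename, mul_zero, add_zero]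

lemma X_mul_rename_pderiv_mem (f : MvPolynomial (Fin n) ℂ) (i : Fin n) :
    X (Fin.last n) * rename Fin.castSucc (pderiv i f) ∈ JW n f := by
  rw [← pderiv_W_castSucc]
  exact Ideal.subset_span ⟨_, rfl⟩

lemma rename_self_mem (f : MvPolynomial (Fin n) ℂ) :
    rename Fin.castSucc f ∈ JW n f := by
  rw [← pderiv_W_last]
  exact Ideal.subset_span ⟨_, rfl⟩

lemma X_mul_pderiv_monomial {N : ℕ} (m : Fin N →₀ ℕ) (c : ℂ) (i : Fin N) :
    X i * pderiv i (monomial m c) = monomial m (c * (m i : ℂ)) := by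
  rw [pderiv_monomial]
  by_cases h : m i = 0
  · simp [h]
  · rw [show (X i : MvPolynomial (Fin N) ℂ) = X i ^ 1 by ring, ← monomial_single_add]
    congr 1
    rw [add_comm, tsub_add_cancel_of_le]
    exact Finsupp.single_le_iff.2 (Nat.one_le_iff_ne_zero.2 h)

lemma degree_eq_sum_univ {N : ℕ} (d : Fin N →₀ ℕ) : d.degree = ∑ i, d i :=
  Finset.sum_subset (Finset.subset_univ _)
    (fun _ _ hi => Finsupp.notMem_support_iff.1 hi)

lemma euler (hf : f.IsHomogeneous n) :
    (n : ℂ) • f = ∑ i, X i * pderiv i f := by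
  have key : ∀ i : Fin n, X i * pderiv i f
      = ∑ m ∈ f.support, monomial m (coeff m f * (m i : ℂ)) := by
    intro i
    conv_lhs => rw [f.as_sum]
    rw [map_sum, Finset.mul_sum]
    exact Finset.sum_congr rfl fun m _ => X_mul_pderiv_monomial m _ i
  simp only [key]
  rw [Finset.sum_comm]
  conv_lhs => rw [f.as_sum]
  rw [Finset.smul_sum]
  refine Finset.sum_congr rfl fun m hm => ?_
  have hdeg : m.degree = n := by
    rw [Finsupp.degree_eq_weight_one]; exact hf (MvPolynomial.mem_support_iff.1 hm)
  rw [← map_sum (monomial m) (fun i => (coeff m f) * (m i : ℂ)) Finset.univ,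
    ← Finset.mul_sum, ← Nat.cast_sum, ← degree_eq_sum_univ, hdeg, smul_monomial,
    smul_eq_mul, mul_comm]

lemma f_mem_Jf (hn : n ≠ 0) (hf : f.IsHomogeneous n) : f ∈ Jf n f := by
  have hmem : ((n : ℂ) • f) ∈ Jf n f := by
    rw [euler hf]
    exact Ideal.sum_mem _ fun i _ =>
      Ideal.mul_mem_left _ _ (Ideal.subset_span ⟨i, rfl⟩)
  have h2 : (C ((n : ℂ)⁻¹) * ((n : ℂ) • f)) ∈ Jf n f := Ideal.mul_mem_left _ _ hmem
  rwa [← smul_eq_C_mul, inv_smul_smul₀ (Nat.cast_ne_zero.2 hn)] at h2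

lemma degree_add {N : ℕ} (a b : Fin N →₀ ℕ) : (a + b).degree = a.degree + b.degree := by
  simp [degree_eq_sum_univ, Finsupp.add_apply, Finset.sum_add_distrib]

lemma degree_single {N : ℕ} (i : Fin N) (e : ℕ) : (Finsupp.single i e).degree = e := by
  simp [degree_eq_sum_univ, Finsupp.single_apply]

lemma pderiv_isHomogeneous {N d : ℕ} {g : MvPolynomial (Fin N) ℂ}
    (hg : g.IsHomogeneous d) (i : Fin N) : (pderiv i g).IsHomogeneous (d - 1) := by
  conv_lhs => rw [g.as_sum]
  rw [map_sum]
  refine MvPolynomial.IsHomogeneous.sum _ _ _ fun m hm => ?_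
  rw [pderiv_monomial]
  by_cases h : m i = 0
  · simp only [h, Nat.cast_zero, mul_zero, monomial_zero]
    exact isHomogeneous_zero _ _ _
  · refine isHomogeneous_monomial _ ?_
    have hle : Finsupp.single i 1 ≤ m :=
      Finsupp.single_le_iff.2 (Nat.one_le_iff_ne_zero.2 h)
    have hdeg : m.degree = d := by
      rw [Finsupp.degree_eq_weight_one]
      exact hg (MvPolynomial.mem_support_iff.1 hm)
    have := degree_add (m - Finsupp.single i 1) (Finsupp.single i 1)
    rw [tsub_add_cancel_of_le hle, degree_single, hdeg] at this
    omega

lemma homogeneousComponent_mul_mem {N e d : ℕ} {g q : MvPolynomial (Fin N) ℂ}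
    (hg : g.IsHomogeneous e) (I : Ideal (MvPolynomial (Fin N) ℂ)) (hgI : g ∈ I) :
    homogeneousComponent d (q * g) ∈ I := by
  have hq : q * g = ∑ j ∈ Finset.range (q.totalDegree + 1), homogeneousComponent j q * g := by
    rw [← Finset.sum_mul, sum_homogeneousComponent]
  rw [hq, map_sum]
  refine Ideal.sum_mem _ fun j _ => ?_
  rw [homogeneousComponent_of_mem
    ((mem_homogeneousSubmodule _ _).2 ((homogeneousComponent_isHomogeneous j q).mul hg))]
  split_ifs
  · exact Ideal.mul_mem_left _ _ hgI
  · exact I.zero_mem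

lemma homogeneousComponent_mem_Jf (hf : f.IsHomogeneous n) {u : MvPolynomial (Fin n) ℂ}
    (hu : u ∈ Jf n f) (d : ℕ) : homogeneousComponent d u ∈ Jf n f := by
  rw [Jf, Finsupp.mem_ideal_span_range_iff_exists_finsupp] at hu
  obtain ⟨c, rfl⟩ := hu
  rw [map_finsuppSum]
  refine Ideal.sum_mem _ fun i _ => ?_
  exact homogeneousComponent_mul_mem (pderiv_isHomogeneous hf i) _
    (Ideal.subset_span ⟨i, rfl⟩)

lemma constantCoeff_pderiv_eq_zero (hn : 2 ≤ n) (hf : f.IsHomogeneous n) (i : Fin n) :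
    constantCoeff (pderiv i f) = 0 := by
  by_contra h
  have h2 := pderiv_isHomogeneous hf i
  have h3 : (Finsupp.weight 1) (0 : Fin n →₀ ℕ) = n - 1 := by
    refine h2 ?_
    rwa [← constantCoeff_eq]
  rw [map_zero] at h3
  omega

lemma eq_zero_of_mem_Jf_isHomogeneous_zero (hn : 2 ≤ n) (hf : f.IsHomogeneous n)
    {u : MvPolynomial (Fin n) ℂ} (hu : u ∈ Jf n f) (h0 : u.IsHomogeneous 0) : u = 0 := by
  have hc : constantCoeff u = 0 := by
    rw [Jf, Finsupp.mem_ideal_span_range_iff_exists_finsupp] at hu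
    obtain ⟨c, rfl⟩ := hu
    rw [map_finsuppSum]
    refine Finset.sum_eq_zero fun i _ => ?_
    simp [constantCoeff_pderiv_eq_zero hn hf]
  ext d
  by_cases hd : d = 0
  · subst hd
    simpa [constantCoeff_eq] using hc
  · rw [coeff_zero]
    by_contra h
    have := h0 h
    replace this : d.degree = 0 := by rw [Finsupp.degree_eq_weight_one]; exact this
    exact hd ((Finsupp.degree_eq_zero_iff d).1 this)

/-- Restriction of an exponent vector on `Fin (n+1)` to `Fin n`. -/
def restrict (m : Fin (n + 1) →₀ ℕ) : Fin n →₀ ℕ :=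
  Finsupp.comapDomain Fin.castSucc m ((Fin.castSucc_injective n).injOn)

lemma restrict_apply (m : Fin (n + 1) →₀ ℕ) (i : Fin n) :
    restrict m i = m (Fin.castSucc i) := rfl

lemma last_not_mem_range_castSucc : Fin.last n ∉ Set.range (Fin.castSucc (n := n)) := by
  rintro ⟨i, hi⟩
  exact (Fin.castSucc_lt_last i).ne hi

lemma single_add_mapDomain_restrict (m : Fin (n + 1) →₀ ℕ) :
    Finsupp.single (Fin.last n) (m (Fin.last n))
      + Finsupp.mapDomain Fin.castSucc (restrict m) = m := by
  ext v
  rw [Finsupp.add_apply]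
  induction v using Fin.lastCases with
  | last =>
    rw [Finsupp.mapDomain_notin_range _ _ last_not_mem_range_castSucc,
      Finsupp.single_eq_same, add_zero]
  | cast i =>
    rw [Finsupp.single_eq_of_ne' (Fin.castSucc_lt_last i).ne',
      Finsupp.mapDomain_apply (Fin.castSucc_injective n), restrict_apply, zero_add]

lemma monomial_eq_X_pow_mul (m : Fin (n + 1) →₀ ℕ) (c : ℂ) :
    monomial m c = X (Fin.last n) ^ (m (Fin.last n))
      * rename Fin.castSucc (monomial (restrict m) c) := by
  rw [rename_monomial, X_pow_eq_monomial, monomial_mul, one_mul,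
    single_add_mapDomain_restrict]

lemma weight_eq (m : Fin (n + 1) →₀ ℕ) :
    Finsupp.weight (chargeWt n) m
      = (∑ i : Fin n, (m (Fin.castSucc i) : ℤ)) - (m (Fin.last n) : ℤ) * n := by
  rw [Finsupp.weight_apply, Finsupp.sum_fintype _ _ (fun v => by simp),
    Fin.sum_univ_castSucc]
  have h1 : ∀ i : Fin n, chargeWt n (Fin.castSucc i) = 1 := fun i => by
    rw [chargeWt, if_neg (Fin.castSucc_lt_last i).ne]
  have h2 : chargeWt n (Fin.last n) = -(n : ℤ) := by rw [chargeWt, if_pos rfl]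
  simp only [h1, h2, smul_eq_mul, mul_one]
  ring

lemma degree_restrict_of_charge_zero {m : Fin (n + 1) →₀ ℕ}
    (h : Finsupp.weight (chargeWt n) m = 0) :
    (restrict m).degree = n * m (Fin.last n) := by
  rw [weight_eq] at h
  have h2 : ((restrict m).degree : ℤ) = (n * m (Fin.last n) : ℕ) := by
    rw [degree_eq_sum_univ]
    push_cast
    simp only [restrict_apply]
    rw [mul_comm ((m (Fin.last n)) : ℤ) (n : ℤ)] at h
    omega
  exact_mod_cast h2

lemma exists_decomp {w : MvPolynomial (Fin (n + 1)) ℂ}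
    (hw : w.IsWeightedHomogeneous (chargeWt n) 0) :
    ∃ (N : ℕ) (u : ℕ → MvPolynomial (Fin n) ℂ),
      (∀ a, (u a).IsHomogeneous (n * a)) ∧
      w = ∑ a ∈ Finset.range N, X (Fin.last n) ^ a * rename Fin.castSucc (u a) := by
  classical
  refine ⟨w.totalDegree + 1,
    fun a => ∑ m ∈ w.support.filter (fun m => m (Fin.last n) = a),
      monomial (restrict m) (coeff m w), fun a => ?_, ?_⟩
  · refine MvPolynomial.IsHomogeneous.sum _ _ _ fun m hm => ?_
    obtain ⟨hm1, hm2⟩ := Finset.mem_filter.1 hm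
    refine isHomogeneous_monomial _ ?_
    rw [degree_restrict_of_charge_zero (hw (MvPolynomial.mem_support_iff.1 hm1)), hm2]
  · have step : ∀ a ∈ Finset.range (w.totalDegree + 1),
        X (Fin.last n) ^ a * rename Fin.castSucc
          (∑ m ∈ w.support.filter (fun m => m (Fin.last n) = a),
            monomial (restrict m) (coeff m w))
        = ∑ m ∈ w.support.filter (fun m => m (Fin.last n) = a),
            monomial m (coeff m w) := by
      intro a _
      rw [map_sum, Finset.mul_sum]
      refine Finset.sum_congr rfl fun m hm => ?_
      rw [← (Finset.mem_filter.1 hm).2, ← monomial_eq_X_pow_mul]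
    rw [Finset.sum_congr rfl step,
      Finset.sum_fiberwise_of_maps_to (fun m hm => Finset.mem_range.2 ?_), ← w.as_sum]
    calc m (Fin.last n) ≤ m.degree := Finsupp.le_degree _ m
      _ ≤ w.totalDegree := by
        rw [Finsupp.degree]
        exact MvPolynomial.le_totalDegree hm
      _ < w.totalDegree + 1 := Nat.lt_succ_self _

lemma ev_term (a : ℕ) (u : MvPolynomial (Fin n) ℂ) :
    ev n (X (Fin.last n) ^ a * rename Fin.castSucc u) = u := by
  rw [map_mul, map_pow, ev_X_last, one_pow, one_mul, ev_rename]

lemma X_pow_mul_rename_mem_JW (f : MvPolynomial (Fin n) ℂ) {u : MvPolynomial (Fin n) ℂ}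
    (hu : u ∈ Jf n f) (k : ℕ) :
    X (Fin.last n) ^ (k + 1) * rename Fin.castSucc u ∈ JW n f := by
  rw [Jf, Finsupp.mem_ideal_span_range_iff_exists_finsupp] at hu
  obtain ⟨c, rfl⟩ := hu
  rw [map_finsuppSum, Finsupp.mul_sum]
  refine Ideal.sum_mem _ fun i _ => ?_
  have : X (Fin.last n) ^ (k + 1)
        * rename Fin.castSucc (c i * pderiv i f)
      = (X (Fin.last n) ^ k * rename Fin.castSucc (c i))
        * (X (Fin.last n) * rename Fin.castSucc (pderiv i f)) := by
    rw [map_mul]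
    ring
  show X (Fin.last n) ^ (k + 1) * rename Fin.castSucc (c i * pderiv i f) ∈ JW n f
  rw [this]
  exact Ideal.mul_mem_left _ _ (X_mul_rename_pderiv_mem f i)

/-- Main injectivity lemma. -/
lemma mem_JW_of_ev_mem_Jf (hn : 2 ≤ n) (hf : f.IsHomogeneous n)
    {w : MvPolynomial (Fin (n + 1)) ℂ}
    (hw : w.IsWeightedHomogeneous (chargeWt n) 0)
    (h : ev n w ∈ Jf n f) : w ∈ JW n f := by
  obtain ⟨N, u, hu, rfl⟩ := exists_decomp hw
  rw [map_sum] at h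
  have hev : ∀ a ∈ Finset.range N,
      ev n (X (Fin.last n) ^ a * rename Fin.castSucc (u a)) = u a :=
    fun a _ => ev_term a (u a)
  rw [Finset.sum_congr rfl hev] at h
  have hua : ∀ a ∈ Finset.range N, u a ∈ Jf n f := by
    intro a ha
    have hc := homogeneousComponent_mem_Jf hf h (n * a)
    rw [map_sum] at hc
    have heq : ∀ b ∈ Finset.range N, homogeneousComponent (n * a) (u b)
        = if b = a then u a else 0 := by
      intro b _
      rw [homogeneousComponent_of_mem ((mem_homogeneousSubmodule _ _).2 (hu b))]
      by_cases hb : b = a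
      · simp [hb]
      · rw [if_neg, if_neg hb]
        intro hcontra
        exact hb (Nat.eq_of_mul_eq_mul_left (by omega) hcontra.symm)
    rwa [Finset.sum_congr rfl heq, Finset.sum_ite_eq' _ a _, if_pos ha] at hc
  refine Ideal.sum_mem _ fun a ha => ?_
  match a with
  | 0 =>
    have h0 : u 0 = 0 := eq_zero_of_mem_Jf_isHomogeneous_zero hn hf (hua 0 ha)
      (by simpa using hu 0)
    rw [h0, map_zero, mul_zero]
    exact Ideal.zero_mem _
  | (k + 1) => exact X_pow_mul_rename_mem_JW f (hua _ ha) k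

lemma weight_mapDomain (m : Fin n →₀ ℕ) :
    Finsupp.weight (chargeWt n) (Finsupp.mapDomain Fin.castSucc m) = (m.degree : ℤ) := by
  rw [weight_eq, Finsupp.mapDomain_notin_range _ _ last_not_mem_range_castSucc]
  simp only [Finsupp.mapDomain_apply (Fin.castSucc_injective n)]
  rw [degree_eq_sum_univ]
  push_cast
  ring

lemma rename_isWeightedHomogeneous {u : MvPolynomial (Fin n) ℂ} {d : ℕ}
    (hu : u.IsHomogeneous d) :
    (rename Fin.castSucc u).IsWeightedHomogeneous (chargeWt n) d := by
  intro m hm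
  obtain ⟨m', hmap, hm'⟩ := coeff_rename_ne_zero _ _ _ hm
  rw [← hmap, weight_mapDomain]
  have : m'.degree = d := by
    rw [Finsupp.degree_eq_weight_one]
    exact hu hm'
  exact_mod_cast this

lemma X_pow_mul_rename_charge_zero {u : MvPolynomial (Fin n) ℂ} {k : ℕ}
    (hu : u.IsHomogeneous (k * n)) :
    (X (Fin.last n) ^ k * rename Fin.castSucc u).IsWeightedHomogeneous (chargeWt n) 0 := by
  have h1 : (X (Fin.last n) ^ k : MvPolynomial (Fin (n + 1)) ℂ).IsWeightedHomogeneous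
      (chargeWt n) (-(k * n : ℤ)) := by
    rw [X_pow_eq_monomial]
    refine isWeightedHomogeneous_monomial _ _ _ ?_
    rw [Finsupp.weight_apply, Finsupp.sum_single_index (by simp)]
    rw [chargeWt, if_pos rfl]
    push_cast
    ring_nf
  have h2 := (h1.mul (rename_isWeightedHomogeneous hu))
  have : (-(k * n : ℤ)) + ((k * n : ℕ) : ℤ) = 0 := by push_cast; ring
  rwa [this] at h2
lemma mem_chargeZero {z : MvPolynomial (Fin (n + 1)) ℂ ⧸ JW n f}
    (hz : z ∈ chargeZeroJacobian n f) :
    ∃ w : MvPolynomial (Fin (n + 1)) ℂ,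
      w.IsWeightedHomogeneous (chargeWt n) 0 ∧ z = Ideal.Quotient.mk (JW n f) w := by
  induction hz using Algebra.adjoin_induction with
  | mem x hx => exact hx
  | algebraMap r =>
    exact ⟨C r, isWeightedHomogeneous_C _ r, rfl⟩
  | add x y hx hy hx' hy' =>
    obtain ⟨w1, hw1, rfl⟩ := hx'
    obtain ⟨w2, hw2, rfl⟩ := hy'
    exact ⟨w1 + w2, hw1.add hw2, (map_add _ _ _).symm⟩
  | mul x y hx hy hx' hy' =>
    obtain ⟨w1, hw1, rfl⟩ := hx'
    obtain ⟨w2, hw2, rfl⟩ := hy'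
    refine ⟨w1 * w2, ?_, (map_mul _ _ _).symm⟩
    have := hw1.mul hw2
    rwa [add_zero] at this

end VJaux

open VJaux

/-- The map `⊕_{k ≥ 0} R(f)_{kn} → R(W)_0` sending the class of a
homogeneous polynomial `u(x)` of degree `kn` to the class of `p^k · u(x)` is a well-defined
ring isomorphism. -/
theorem veronese_jacobian_iso_charge_zero_jacobian
    (n : ℕ) (hn : 2 ≤ n)
    (f : MvPolynomial (Fin n) ℂ) (hf : f.IsHomogeneous n) :
    ∃ Φ : veroneseJacobian n f ≃+* chargeZeroJacobian n f,
      ∀ (k : ℕ) (u : MvPolynomial (Fin n) ℂ) (hu : u.IsHomogeneous (k * n)),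
        (Φ ⟨Ideal.Quotient.mk (Jf n f) u, Algebra.subset_adjoin ⟨k, u, hu, rfl⟩⟩ :
            MvPolynomial (Fin (n + 1)) ℂ ⧸ JW n f)
          = Ideal.Quotient.mk (JW n f)
              ((X (Fin.last n)) ^ k * rename Fin.castSucc u) := by
  classical
  have hn0 : n ≠ 0 := by omega
  set g : MvPolynomial (Fin (n + 1)) ℂ →ₐ[ℂ] (MvPolynomial (Fin n) ℂ ⧸ Jf n f) :=
    (Ideal.Quotient.mkₐ ℂ (Jf n f)).comp (ev n) with hgdef
  have hg_apply : ∀ w, g w = Ideal.Quotient.mk (Jf n f) (ev n w) := fun w => rfl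
  have hle : JW n f ≤ RingHom.ker g := by
    rw [JW]
    refine Ideal.span_le.2 ?_
    rintro _ ⟨v, rfl⟩
    rw [SetLike.mem_coe, RingHom.mem_ker]
    rcases Fin.eq_castSucc_or_eq_last v with ⟨j, rfl⟩ | rfl
    · show g (pderiv (Fin.castSucc j) (Wpol n f)) = 0
      rw [pderiv_W_castSucc, hg_apply]
      have : ev n (X (Fin.last n) * rename Fin.castSucc (pderiv j f)) = pderiv j f := by
        have := ev_term 1 (pderiv j f)
        rwa [pow_one] at this
      rw [this, Ideal.Quotient.eq_zero_iff_mem]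
      exact Ideal.subset_span ⟨j, rfl⟩
    · show g (pderiv (Fin.last n) (Wpol n f)) = 0
      rw [pderiv_W_last, hg_apply, ev_rename, Ideal.Quotient.eq_zero_iff_mem]
      exact f_mem_Jf hn0 hf
  set Ψ : (MvPolynomial (Fin (n + 1)) ℂ ⧸ JW n f) →ₐ[ℂ]
      (MvPolynomial (Fin n) ℂ ⧸ Jf n f) :=
    Ideal.Quotient.liftₐ (JW n f) g (fun a ha => RingHom.mem_ker.1 (hle ha)) with hΨdef
  have hΨ_mk : ∀ w, Ψ (Ideal.Quotient.mk (JW n f) w)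
      = Ideal.Quotient.mk (Jf n f) (ev n w) := by
    intro w
    rw [hΨdef, Ideal.Quotient.liftₐ_apply]
    rfl
  set e0 : chargeZeroJacobian n f →ₐ[ℂ] (MvPolynomial (Fin n) ℂ ⧸ Jf n f) :=
    Ψ.comp (chargeZeroJacobian n f).val with he0def
  have he0_apply : ∀ z : chargeZeroJacobian n f, e0 z = Ψ z.1 := fun z => rfl
  have hinj : Function.Injective e0 := by
    intro z1 z2 heq
    obtain ⟨w1, hw1, hz1⟩ := mem_chargeZero z1.2
    obtain ⟨w2, hw2, hz2⟩ := mem_chargeZero z2.2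
    have heq2 : Ideal.Quotient.mk (Jf n f) (ev n w1)
        = Ideal.Quotient.mk (Jf n f) (ev n w2) := by
      rw [← hΨ_mk, ← hΨ_mk, ← hz1, ← hz2, ← he0_apply, ← he0_apply, heq]
    rw [Ideal.Quotient.eq] at heq2
    have hsub : (w1 - w2).IsWeightedHomogeneous (chargeWt n) 0 := by
      have m1 : w1 ∈ weightedHomogeneousSubmodule ℂ (chargeWt n) 0 := hw1
      have m2 : w2 ∈ weightedHomogeneousSubmodule ℂ (chargeWt n) 0 := hw2
      exact Submodule.sub_mem _ m1 m2
    have hev : ev n (w1 - w2) ∈ Jf n f := by rwa [map_sub]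
    have hmem := mem_JW_of_ev_mem_Jf hn hf hsub hev
    apply Subtype.ext
    rw [hz1, hz2, Ideal.Quotient.eq]
    exact hmem
  have hrange : e0.range = veroneseJacobian n f := by
    apply le_antisymm
    · rintro _ ⟨z, rfl⟩
      show e0 z ∈ veroneseJacobian n f
      obtain ⟨w, hw, hz⟩ := mem_chargeZero z.2
      rw [he0_apply, hz, hΨ_mk]
      obtain ⟨N, u, hu, hdec⟩ := exists_decomp hw
      rw [hdec, map_sum, map_sum]
      refine Subalgebra.sum_mem _ fun a _ => ?_
      rw [ev_term]
      exact Algebra.subset_adjoin ⟨a, u a, by rw [mul_comm]; exact hu a, rfl⟩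
    · rw [veroneseJacobian]
      refine Algebra.adjoin_le ?_
      rintro a ⟨k, u, hu, rfl⟩
      refine ⟨⟨Ideal.Quotient.mk (JW n f) (X (Fin.last n) ^ k * rename Fin.castSucc u),
        Algebra.subset_adjoin ⟨_, X_pow_mul_rename_charge_zero hu, rfl⟩⟩, ?_⟩
      show e0 _ = _
      rw [he0_apply, hΨ_mk, ev_term]
  let e1 : chargeZeroJacobian n f ≃ₐ[ℂ] veroneseJacobian n f :=
    (AlgEquiv.ofInjective e0 hinj).trans (Subalgebra.equivOfEq _ _ hrange)
  refine ⟨e1.symm.toRingEquiv, ?_⟩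
  intro k u hu
  set t : chargeZeroJacobian n f :=
    ⟨Ideal.Quotient.mk (JW n f) (X (Fin.last n) ^ k * rename Fin.castSucc u),
      Algebra.subset_adjoin ⟨_, X_pow_mul_rename_charge_zero hu, rfl⟩⟩ with htdef
  have het : e1 t = ⟨Ideal.Quotient.mk (Jf n f) u, Algebra.subset_adjoin ⟨k, u, hu, rfl⟩⟩ := by
    apply Subtype.ext
    show ((AlgEquiv.ofInjective e0 hinj t : e0.range) : MvPolynomial (Fin n) ℂ ⧸ Jf n f)
      = Ideal.Quotient.mk (Jf n f) u
    rw [AlgEquiv.ofInjective_apply, he0_apply, htdef, hΨ_mk, ev_term]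
  have hsymm : e1.symm ⟨Ideal.Quotient.mk (Jf n f) u,
      Algebra.subset_adjoin ⟨k, u, hu, rfl⟩⟩ = t := by
    rw [← het, AlgEquiv.symm_apply_apply]
  show ((e1.symm ⟨Ideal.Quotient.mk (Jf n f) u, Algebra.subset_adjoin ⟨k, u, hu, rfl⟩⟩ :
      chargeZeroJacobian n f) : MvPolynomial (Fin (n + 1)) ℂ ⧸ JW n f) = _
  rw [hsymm]
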